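/- arXiv:2301.02644 — 2 statements merged into one kernel-verified Lean document; each statement's English description precedes it below -/
import Mathlib

section
/- Let k be a commutative ring, d ≥ 0, n ≥ 0. Endow the polynomial ring k[a_1,…,a_d, b_1,…,b_d, γ_1,…,γ_n] with the ℤ×ℤ-weighted grading given by wt(a_i) = (2(d−i+1), 0), wt(b_i) = (2(d−i+1), −2), wt(γ_i) = (2(n+1−i), 0). Then each v_{i,d} is weighted homogeneous of weight (2i, 0), and W_{d,n} is weighted homogeneous of weight (2(n+1), −2). -/
open MvPolynomial

/-- The power series `1 + a_d z + a_{d-1} z^2 + ⋯ + a_1 z^d`, where the variable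
`X m : MvPolynomial (Fin d) k` represents `a_{m+1}`. -/
noncomputable def Pser (k : Type) [CommRing k] (d : ℕ) :
    PowerSeries (MvPolynomial (Fin d) k) :=
  1 + ∑ m : Fin d, PowerSeries.monomial (d - (m : ℕ)) (X m)

/-- `vcoef k d i` is `v_{i,d}`, the `i`-th coefficient of the inverse of the
power series `1 + a_d z + ⋯ + a_1 z^d`. -/
noncomputable def vcoef (k : Type) [CommRing k] (d : ℕ) (i : ℕ) :
    MvPolynomial (Fin d) k :=
  PowerSeries.coeff i ((Pser k d).invOfUnit 1)

/-- The type of variables `a_1, …, a_d, b_1, …, b_d, γ_1, …, γ_n`: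
`Sum.inl (Sum.inl p)` is `a_{p+1}`, `Sum.inl (Sum.inr p)` is `b_{p+1}`,
`Sum.inr q` is `γ_{q+1}`. -/
abbrev WVar (d n : ℕ) : Type := (Fin d ⊕ Fin d) ⊕ Fin n

/-- `v_{i,d}` viewed in `k[a,b,γ]`. -/
noncomputable def va (k : Type) [CommRing k] (d n : ℕ) (i : ℕ) :
    MvPolynomial (WVar d n) k :=
  rename (fun m => Sum.inl (Sum.inl m)) (vcoef k d i)

/-- `γ_{i+1}`, with the convention `γ_{n+1} = 1`. -/
noncomputable def gamW (k : Type) [CommRing k] (d n : ℕ) (i : ℕ) :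
    MvPolynomial (WVar d n) k :=
  if h : i < n then X (Sum.inr (⟨i, h⟩ : Fin n)) else 1

/-- `W_{d,n} = ∑_{i=0}^n γ_{i+1} (b_d v_{i,d} + b_{d-1} v_{i-1,d} + ⋯ + b_1 v_{i-d+1,d})`,
where terms `v_{i,d}` with `i < 0` are omitted (they are zero). -/
noncomputable def Wpoly (k : Type) [CommRing k] (d n : ℕ) :
    MvPolynomial (WVar d n) k :=
  ∑ i ∈ Finset.range (n + 1), gamW k d n i *
    ∑ j : Fin d,
      if d - 1 - (j : ℕ) ≤ i then
        X (Sum.inl (Sum.inr j)) * va k d n (i - (d - 1 - (j : ℕ)))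
      else 0

/-- The weights on `k[a_1,…,a_d]`: `wt(a_m) = (2(d-m+1), 0)`, i.e. the variable of
index `p` (representing `a_{p+1}`) has weight `(2(d-p), 0)`. -/
def wtA (d : ℕ) : Fin d → ℤ × ℤ := fun p => (2 * ((d : ℤ) - (p : ℕ)), 0)

/-- The weights on `k[a_1,…,a_d,b_1,…,b_d,γ_1,…,γ_n]`: `wt(a_m) = (2(d-m+1), 0)`,
`wt(b_m) = (2(d-m+1), -2)`, `wt(γ_m) = (2(n+1-m), 0)`. -/
def wtW (d n : ℕ) : WVar d n → ℤ × ℤ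
  | Sum.inl (Sum.inl p) => (2 * ((d : ℤ) - (p : ℕ)), 0)
  | Sum.inl (Sum.inr p) => (2 * ((d : ℤ) - (p : ℕ)), -2)
  | Sum.inr q => (2 * ((n : ℤ) - (q : ℕ)), 0)

theorem weight_mapDomain' {σ τ M : Type*} [AddCommMonoid M] (g : σ → τ) (w : τ → M)
    (d : σ →₀ ℕ) : Finsupp.weight w (Finsupp.mapDomain g d) = Finsupp.weight (w ∘ g) d := by
  rw [Finsupp.weight_apply, Finsupp.weight_apply,
    Finsupp.sum_mapDomain_index (by simp) (by intros; rw [add_smul])]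
  rfl

theorem isWeightedHomogeneous_rename {σ τ : Type*} {k : Type} [CommRing k] {M : Type*}
    [AddCommMonoid M] {w : τ → M} (g : σ → τ) {φ : MvPolynomial σ k} {m : M}
    (h : IsWeightedHomogeneous (w ∘ g) φ m) :
    IsWeightedHomogeneous w (rename g φ) m := by
  rw [← φ.support_sum_monomial_coeff, map_sum]
  simp_rw [rename_monomial]
  apply IsWeightedHomogeneous.sum
  intro c hc
  apply isWeightedHomogeneous_monomial
  rw [weight_mapDomain']
  exact h (mem_support_iff.mp hc)

theorem IsWeightedHomogeneous.neg' {σ : Type*} {k : Type} [CommRing k] {M : Type*}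
    [AddCommMonoid M] {w : σ → M} {φ : MvPolynomial σ k} {m : M}
    (h : IsWeightedHomogeneous w φ m) : IsWeightedHomogeneous w (-φ) m := by
  rw [← mem_weightedHomogeneousSubmodule] at h ⊢
  exact neg_mem h

theorem coeff_Pser (k : Type) [CommRing k] (d j : ℕ) :
    PowerSeries.coeff j (Pser k d) =
      (if j = 0 then 1 else 0) + ∑ m : Fin d, if j = d - (m : ℕ) then X m else 0 := by
  simp [Pser, PowerSeries.coeff_one, PowerSeries.coeff_monomial]

theorem Pser_hom (k : Type) [CommRing k] (d j : ℕ) :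
    IsWeightedHomogeneous (wtA d) (PowerSeries.coeff j (Pser k d)) (2 * (j : ℤ), 0) := by
  rw [coeff_Pser]
  rcases eq_or_ne j 0 with rfl | hj
  · rw [if_pos rfl]
    have hz : ∀ m : Fin d, (if (0:ℕ) = d - (m : ℕ) then (X m : MvPolynomial (Fin d) k) else 0)
        = 0 := by
      intro m
      rw [if_neg]
      have := m.isLt; omega
    rw [Finset.sum_congr rfl (fun m _ => hz m), Finset.sum_const, smul_zero, add_zero]
    have h1 := isWeightedHomogeneous_one k (wtA d)
    simpa [← Prod.mk_zero_zero] using h1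
  · rw [if_neg hj, zero_add]
    apply IsWeightedHomogeneous.sum
    intro m _
    split_ifs with h
    · have hx := isWeightedHomogeneous_X k (wtA d) m
      have he : wtA d m = (2 * (j : ℤ), 0) := by
        have := m.isLt
        simp only [wtA, Prod.mk.injEq]
        exact ⟨by omega, trivial⟩
      rwa [he] at hx
    · exact isWeightedHomogeneous_zero k _ _

theorem vcoef_hom (k : Type) [CommRing k] (d : ℕ) (i : ℕ) :
    IsWeightedHomogeneous (wtA d) (vcoef k d i) (2 * (i : ℤ), 0) := by
  induction i using Nat.strong_induction_on with
  | _ i ih =>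
    rw [vcoef, PowerSeries.coeff_invOfUnit]
    rcases eq_or_ne i 0 with rfl | hi
    · rw [if_pos rfl]
      have h1 := isWeightedHomogeneous_one k (wtA d)
      simp only [inv_one, Units.val_one]
      simpa [← Prod.mk_zero_zero] using h1
    · rw [if_neg hi]
      simp only [inv_one, Units.val_one, neg_mul, one_mul]
      apply IsWeightedHomogeneous.neg'
      apply IsWeightedHomogeneous.sum
      intro x hx
      split_ifs with h
      · have hsum := Finset.HasAntidiagonal.mem_antidiagonal.mp hx
        have h1 := Pser_hom k d x.1
        have h2 : IsWeightedHomogeneous (wtA d)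
            (PowerSeries.coeff x.2 ((Pser k d).invOfUnit 1)) (2 * (x.2 : ℤ), 0) := ih x.2 h
        have h3 := h1.mul h2
        have he : ((2 * (x.1 : ℤ), (0:ℤ)) + (2 * (x.2 : ℤ), 0)) = (2 * (i : ℤ), 0) := by
          rw [Prod.mk_add_mk, Prod.mk.injEq]
          omega
        rwa [he] at h3
      · exact isWeightedHomogeneous_zero k _ _

theorem gamW_hom (k : Type) [CommRing k] (d n i : ℕ) (hi : i ≤ n) :
    IsWeightedHomogeneous (wtW d n) (gamW k d n i) (2 * ((n : ℤ) - i), 0) := by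
  rw [gamW]
  split_ifs with h
  · have hx := isWeightedHomogeneous_X k (wtW d n) (Sum.inr (⟨i, h⟩ : Fin n))
    convert hx using 1
    simp [wtW]
  · have he : ((2 * ((n : ℤ) - i), (0:ℤ))) = ((0:ℤ), (0:ℤ)) := by
      exact Prod.ext (by omega) rfl
    rw [he]
    exact isWeightedHomogeneous_one k (wtW d n)

/-- each `v_{i,d}` is weighted homogeneous of weight `(2i, 0)`, and
`W_{d,n}` is weighted homogeneous of weight `(2(n+1), -2)`. -/
theorem statement3 (k : Type) [CommRing k] (d n : ℕ) :
    (∀ i : ℕ, IsWeightedHomogeneous (wtA d) (vcoef k d i) (2 * (i : ℤ), 0)) ∧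
    IsWeightedHomogeneous (wtW d n) (Wpoly k d n) (2 * ((n : ℤ) + 1), -2) := by
  refine ⟨vcoef_hom k d, ?_⟩
  rw [Wpoly]
  apply IsWeightedHomogeneous.sum
  intro i hi
  have hin : i ≤ n := by
    have := Finset.mem_range.mp hi; omega
  have hg := gamW_hom k d n i hin
  have hinner : IsWeightedHomogeneous (wtW d n)
      (∑ j : Fin d, if d - 1 - (j : ℕ) ≤ i then
        X (Sum.inl (Sum.inr j)) * va k d n (i - (d - 1 - (j : ℕ))) else 0)
      (2 * ((i : ℤ) + 1), -2) := by
    apply IsWeightedHomogeneous.sum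
    intro j _
    split_ifs with h
    · have hb := isWeightedHomogeneous_X k (wtW d n) (Sum.inl (Sum.inr j))
      have hv : IsWeightedHomogeneous (wtW d n) (va k d n (i - (d - 1 - (j : ℕ))))
          (2 * ((i - (d - 1 - (j : ℕ)) : ℕ) : ℤ), 0) := by
        apply isWeightedHomogeneous_rename
        exact vcoef_hom k d _
      have h3 := hb.mul hv
      have he : (wtW d n (Sum.inl (Sum.inr j)) + (2 * ((i - (d - 1 - (j : ℕ)) : ℕ) : ℤ), 0))
          = (2 * ((i : ℤ) + 1), -2) := by
        have hj := j.isLt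
        show ((2 * ((d : ℤ) - (j : ℕ)), (-2 : ℤ)) + _) = _
        rw [Prod.mk_add_mk, Prod.mk.injEq]
        omega
      rwa [he] at h3
    · exact isWeightedHomogeneous_zero k _ _
  have h4 := hg.mul hinner
  have he : ((2 * ((n : ℤ) - i), (0:ℤ)) + (2 * ((i : ℤ) + 1), -2)) = (2 * ((n : ℤ) + 1), -2) := by
    rw [Prod.mk_add_mk, Prod.mk.injEq]
    omega
  rwa [he] at h4
end

section
/- Let k be a field, d ≥ 0, and R = k[a_1,…,a_d, t]. Let L be the free R-module with basis b′_1,…,b′_{d+1}, b_1,…,b_d, and set b̃_i = b′_i + t·b_i − b_{i−1} ∈ L for 1 ≤ i ≤ d+1 (conventions b_0 = b_{d+1} = 0). Let I = Σ_{i=1}^{d+1} R·b̃_i ⊆ L, and let I^⊥ = {φ ∈ Hom_R(L, R) : φ(x) = 0 for all x ∈ I}. Then I^⊥ is a free R-module with basis the d elements b′^*_{i+1} + b^*_i − t·b′^*_i for 1 ≤ i ≤ d, where (b′^*_j, b^*_j) denotes the dual basis of Hom_R(L, R). -/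
open MvPolynomial

/-- Variables of `R = k[a_1,…,a_d, t]`. -/
abbrev RVar (d : ℕ) : Type := Fin d ⊕ Unit

/-- Index type for the basis `b'_1,…,b'_{d+1}, b_1,…,b_d` of `L`:
`Sum.inl p` is `b'_{p+1}`, `Sum.inr p` is `b_{p+1}`. -/
abbrev LIdx (d : ℕ) : Type := Fin (d + 1) ⊕ Fin d

/-- The basis vector `b_m` of `L` (`1 ≤ m ≤ d`), with conventions `b_0 = b_{d+1} = 0`. -/
noncomputable def bvec (k : Type) [Field k] (d : ℕ) (m : ℕ) :
    LIdx d → MvPolynomial (RVar d) k :=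
  if h : 1 ≤ m ∧ m ≤ d then Pi.single (Sum.inr (⟨m - 1, by omega⟩ : Fin d))
    (1 : MvPolynomial (RVar d) k)
  else 0

/-- `b̃_i = b'_i + t·b_i - b_{i-1} ∈ L` (with `b_0 = b_{d+1} = 0`), for `i = p + 1`. -/
noncomputable def btildeL (k : Type) [Field k] (d : ℕ) (p : Fin (d + 1)) :
    LIdx d → MvPolynomial (RVar d) k :=
  Pi.single (Sum.inl p) (1 : MvPolynomial (RVar d) k) +
    (X (Sum.inr ()) : MvPolynomial (RVar d) k) • bvec k d ((p : ℕ) + 1) -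
    bvec k d (p : ℕ)

/-- `I = ∑ R·b̃_i ⊆ L`. -/
noncomputable def Isub (k : Type) [Field k] (d : ℕ) :
    Submodule (MvPolynomial (RVar d) k) (LIdx d → MvPolynomial (RVar d) k) :=
  Submodule.span _ (Set.range (btildeL k d))

/-- The dual basis element `b'^*_{p+1}` of `Hom_R(L, R)`. -/
noncomputable def bpdual (k : Type) [Field k] (d : ℕ) (p : Fin (d + 1)) :
    Module.Dual (MvPolynomial (RVar d) k) (LIdx d → MvPolynomial (RVar d) k) :=
  LinearMap.proj (Sum.inl p)

/-- The dual basis element `b^*_{p+1}` of `Hom_R(L, R)`. -/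
noncomputable def bdual (k : Type) [Field k] (d : ℕ) (p : Fin d) :
    Module.Dual (MvPolynomial (RVar d) k) (LIdx d → MvPolynomial (RVar d) k) :=
  LinearMap.proj (Sum.inr p)

-- auxiliary
variable (k : Type) [Field k] (d : ℕ)

noncomputable def phiAux (p : Fin d) :
    Module.Dual (MvPolynomial (RVar d) k) (LIdx d → MvPolynomial (RVar d) k) :=
  bpdual k d (⟨(p : ℕ) + 1, Nat.succ_lt_succ p.isLt⟩ : Fin (d + 1)) +
    bdual k d p -
    (X (Sum.inr ()) : MvPolynomial (RVar d) k) •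
      bpdual k d (⟨(p : ℕ), Nat.lt_succ_of_lt p.isLt⟩ : Fin (d + 1))

lemma phiAux_apply (p : Fin d) (v : LIdx d → MvPolynomial (RVar d) k) :
    phiAux k d p v = v (Sum.inl ⟨(p : ℕ) + 1, Nat.succ_lt_succ p.isLt⟩) +
      v (Sum.inr p) -
      (X (Sum.inr ()) : MvPolynomial (RVar d) k) *
        v (Sum.inl ⟨(p : ℕ), Nat.lt_succ_of_lt p.isLt⟩) := by
  simp [phiAux, bpdual, bdual]

lemma btildeL_inl (q j : Fin (d + 1)) :
    btildeL k d q (Sum.inl j) = if (j : ℕ) = q then 1 else 0 := by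
  simp only [btildeL, Pi.sub_apply, Pi.add_apply, Pi.smul_apply, bvec]
  split_ifs with h1 h2 h3 <;>
    simp [Pi.single_apply, Fin.ext_iff, smul_eq_mul] <;> tauto

lemma bvec_inr (m : ℕ) (j : Fin d) :
    bvec k d m (Sum.inr j) = if (j : ℕ) + 1 = m then 1 else 0 := by
  simp only [bvec]
  split_ifs with h1 h2 h3 <;>
    simp_all [Pi.single_apply, Fin.ext_iff] <;> omega

lemma btildeL_inr (q : Fin (d + 1)) (j : Fin d) :
    btildeL k d q (Sum.inr j) =
      (X (Sum.inr ()) : MvPolynomial (RVar d) k) * (if (j : ℕ) = q then 1 else 0) -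
        (if (j : ℕ) + 1 = q then 1 else 0) := by
  have h0 : (Pi.single (Sum.inl q) (1 : MvPolynomial (RVar d) k) : LIdx d → MvPolynomial (RVar d) k) (Sum.inr j) = 0 := by
    simp [Pi.single_apply]
  simp only [btildeL, Pi.sub_apply, Pi.add_apply, Pi.smul_apply, h0, zero_add,
    bvec_inr, smul_eq_mul]
  congr 2
  simp [eq_comm]

lemma phiAux_btildeL (p : Fin d) (q : Fin (d + 1)) :
    phiAux k d p (btildeL k d q) = 0 := by
  rw [phiAux_apply, btildeL_inl, btildeL_inl, btildeL_inr]
  rcases eq_or_ne ((p:ℕ)+1) (q:ℕ) with h | h <;>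
    rcases eq_or_ne (p:ℕ) (q:ℕ) with h' | h' <;>
    simp [h, h']

lemma phiAux_mem (p : Fin d) : phiAux k d p ∈ Submodule.dualAnnihilator (Isub k d) := by
  rw [Submodule.mem_dualAnnihilator]
  intro w hw
  refine Submodule.span_induction ?_ ?_ ?_ ?_ hw
  · rintro x ⟨q, rfl⟩; exact phiAux_btildeL k d p q
  · simp
  · intro x y _ _ hx hy; simp [hx, hy]
  · intro c x _ hx; simp [hx]

noncomputable def Gmap : (Fin d → MvPolynomial (RVar d) k) →ₗ[MvPolynomial (RVar d) k]
    Module.Dual (MvPolynomial (RVar d) k) (LIdx d → MvPolynomial (RVar d) k) :=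
  ∑ p : Fin d, (LinearMap.proj p).smulRight (phiAux k d p)

lemma Gmap_apply (c : Fin d → MvPolynomial (RVar d) k)
    (v : LIdx d → MvPolynomial (RVar d) k) :
    Gmap k d c v = ∑ p : Fin d, c p * phiAux k d p v := by
  simp [Gmap, LinearMap.sum_apply]

noncomputable def Fmap : ↥(Submodule.dualAnnihilator (Isub k d)) →ₗ[MvPolynomial (RVar d) k]
    (Fin d → MvPolynomial (RVar d) k) :=
  LinearMap.pi fun j =>
    (LinearMap.applyₗ (Pi.single (Sum.inr j) (1 : MvPolynomial (RVar d) k) :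
        LIdx d → MvPolynomial (RVar d) k)).comp
      (Submodule.subtype _)

lemma Fmap_apply (φ : ↥(Submodule.dualAnnihilator (Isub k d))) (j : Fin d) :
    Fmap k d φ j = (φ : Module.Dual (MvPolynomial (RVar d) k)
        (LIdx d → MvPolynomial (RVar d) k))
      (Pi.single (Sum.inr j) (1 : MvPolynomial (RVar d) k)) := by
  simp [Fmap]

lemma phiAux_single_inr (p j : Fin d) :
    phiAux k d p (Pi.single (Sum.inr j) (1 : MvPolynomial (RVar d) k)) =
      if p = j then 1 else 0 := by
  rw [phiAux_apply]
  simp [Pi.single_apply, eq_comm]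

lemma Gmap_mem (c : Fin d → MvPolynomial (RVar d) k) :
    Gmap k d c ∈ Submodule.dualAnnihilator (Isub k d) := by
  have : Gmap k d c ∈ Submodule.span (MvPolynomial (RVar d) k)
      (Set.range (phiAux k d)) := by
    rw [Gmap]
    simp only [LinearMap.sum_apply]
    exact Submodule.sum_mem _ fun p _ => Submodule.smul_mem _ _
      (Submodule.subset_span ⟨p, rfl⟩)
  refine Submodule.span_le.mpr ?_ this
  rintro x ⟨p, rfl⟩
  exact phiAux_mem k d p

/-- `I^⊥ ⊆ Hom_R(L, R)` is free with basis the `d` elements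
`b'^*_{i+1} + b^*_i - t·b'^*_i`, `1 ≤ i ≤ d` (below `i = p + 1`). -/
theorem statement15 (k : Type) [Field k] (d : ℕ) :
    ∃ B : Module.Basis (Fin d) (MvPolynomial (RVar d) k)
        ↥(Submodule.dualAnnihilator (Isub k d)),
      ∀ p : Fin d,
        (B p : Module.Dual (MvPolynomial (RVar d) k)
            (LIdx d → MvPolynomial (RVar d) k)) =
          bpdual k d (⟨(p : ℕ) + 1, by have := p.isLt; omega⟩ : Fin (d + 1)) +
            bdual k d p -
            (X (Sum.inr ()) : MvPolynomial (RVar d) k) •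
              bpdual k d (⟨(p : ℕ), by have := p.isLt; omega⟩ : Fin (d + 1)) := by
  set R := MvPolynomial (RVar d) k
  -- codomain-restricted G
  let G : (Fin d → R) →ₗ[R] ↥(Submodule.dualAnnihilator (Isub k d)) :=
    (Gmap k d).codRestrict _ (Gmap_mem k d)
  have hFG : (Fmap k d).comp G = LinearMap.id := by
    apply LinearMap.ext; intro c
    rw [LinearMap.comp_apply, LinearMap.id_apply]
    funext j
    have h1 : Fmap k d (G c) j = Gmap k d c (Pi.single (Sum.inr j) 1) := by
      rw [Fmap_apply]; rfl
    rw [h1, Gmap_apply, Finset.sum_eq_single j]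
    · simp [phiAux_single_inr]
    · intro p _ hp; simp [phiAux_single_inr, hp]
    · simp
  have hGF : G.comp (Fmap k d) = LinearMap.id := by
    apply LinearMap.ext; intro φ
    apply Subtype.ext
    show Gmap k d (Fmap k d φ) = (φ : Module.Dual R (LIdx d → R))
    apply Module.Basis.ext (Pi.basisFun R (LIdx d))
    intro i
    rw [Pi.basisFun_apply]
    rcases i with q | j
    · -- inl case
      rw [Gmap_apply]
      have hφ : (φ : Module.Dual R (LIdx d → R)) (btildeL k d q) = 0 := by
        have := φ.2
        rw [Submodule.mem_dualAnnihilator] at this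
        exact this _ (Submodule.subset_span ⟨q, rfl⟩)
      have hbt : (φ : Module.Dual R (LIdx d → R)) (Pi.single (Sum.inl q) 1) =
          (φ : Module.Dual R (LIdx d → R)) (bvec k d q) -
            (X (Sum.inr ()) : R) * (φ : Module.Dual R (LIdx d → R)) (bvec k d ((q:ℕ)+1)) := by
        have h2 : (Pi.single (Sum.inl q) (1:R)) = btildeL k d q - (X (Sum.inr ()) : R) • bvec k d ((q:ℕ)+1) + bvec k d q := by
          simp [btildeL]; abel
        rw [h2]
        simp [hφ, sub_eq_iff_eq_add]
        ring
      rw [hbt]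
      -- now compute the sum
      have hterm : ∀ p : Fin d, Fmap k d φ p * phiAux k d p (Pi.single (Sum.inl q) 1) =
          Fmap k d φ p * ((if (p:ℕ)+1 = (q:ℕ) then 1 else 0) - (X (Sum.inr ()) : R) * (if (p:ℕ) = (q:ℕ) then 1 else 0)) := by
        intro p
        rw [phiAux_apply]
        simp [Pi.single_apply, Fin.ext_iff]
      rw [Finset.sum_congr rfl (fun p _ => hterm p)]
      simp only [mul_sub]
      rw [Finset.sum_sub_distrib]
      have hA : ∑ p : Fin d, Fmap k d φ p * (if (p:ℕ)+1 = (q:ℕ) then 1 else 0) =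
          (φ : Module.Dual R (LIdx d → R)) (bvec k d q) := by
        by_cases hq : 1 ≤ (q:ℕ)
        · have hqd : (q:ℕ) - 1 < d := by have := q.isLt; omega
          rw [Finset.sum_eq_single (⟨(q:ℕ)-1, hqd⟩ : Fin d)]
          · have : ((⟨(q:ℕ)-1, hqd⟩ : Fin d) : ℕ) + 1 = (q:ℕ) := by simp; omega
            rw [if_pos this, mul_one, Fmap_apply]
            have : bvec k d (q:ℕ) = Pi.single (Sum.inr (⟨(q:ℕ)-1, hqd⟩ : Fin d)) (1:R) := by
              rw [bvec, dif_pos ⟨hq, by have := q.isLt; omega⟩]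
            rw [this]
          · intro p _ hp
            rw [if_neg, mul_zero]
            intro hc
            exact hp (Fin.ext (by simp at hc ⊢; omega))
          · simp
        · have h0 : (q:ℕ) = 0 := by omega
          have : bvec k d (q:ℕ) = 0 := by rw [bvec, dif_neg]; omega
          rw [this, map_zero]
          apply Finset.sum_eq_zero
          intro p _
          rw [if_neg (by omega), mul_zero]
      have hB : ∑ p : Fin d, Fmap k d φ p * ((X (Sum.inr ()) : R) * (if (p:ℕ) = (q:ℕ) then 1 else 0)) =
          (X (Sum.inr ()) : R) * (φ : Module.Dual R (LIdx d → R)) (bvec k d ((q:ℕ)+1)) := by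
        by_cases hq : (q:ℕ) < d
        · rw [Finset.sum_eq_single (⟨(q:ℕ), hq⟩ : Fin d)]
          · rw [if_pos (by simp), mul_one]
            rw [Fmap_apply]
            have : bvec k d ((q:ℕ)+1) = Pi.single (Sum.inr (⟨(q:ℕ), hq⟩ : Fin d)) (1:R) := by
              rw [bvec, dif_pos ⟨by omega, by omega⟩]
              congr 1
            rw [this]
            ring
          · intro p _ hp
            rw [if_neg, mul_zero, mul_zero]
            intro hc
            exact hp (Fin.ext (by simp at hc ⊢; omega))
          · simp
        · have : bvec k d ((q:ℕ)+1) = 0 := by rw [bvec, dif_neg]; omega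
          rw [this, map_zero, mul_zero]
          apply Finset.sum_eq_zero
          intro p _
          rw [if_neg (by have := p.isLt; omega), mul_zero, mul_zero]
      rw [hA, hB]
    · -- inr case
      rw [Gmap_apply]
      rw [Finset.sum_eq_single j]
      · rw [phiAux_single_inr]
        simp [Fmap_apply]
      · intro p _ hp
        rw [phiAux_single_inr]
        simp [hp]
      · simp
  refine ⟨(Pi.basisFun R (Fin d)).map (LinearEquiv.ofLinear G (Fmap k d) hGF hFG), ?_⟩
  intro p
  rw [Module.Basis.map_apply, Pi.basisFun_apply]
  show (Gmap k d (Pi.single p 1) : Module.Dual R (LIdx d → R)) = _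
  have : Gmap k d (Pi.single p 1) = phiAux k d p := by
    apply LinearMap.ext
    intro v
    rw [Gmap_apply, Finset.sum_eq_single p]
    · simp
    · intro b _ hb; simp [Pi.single_apply, hb]
    · simp
  rw [this]; rfl
end
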